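/- Let q be a prime power, m, n, k, r positive integers with r ≤ n and k + 1 < n. Let α be a generator of a basis (1, α, …, α^{m−1}) of F_{q^m} over F_q. Let H be an (n−k−1)×n matrix over F_{q^m}, let S be a nonzero m×r matrix over F_q, and let C be an r×n matrix over F_q. If the row vector (1, α, …, α^{m−1})·S·C·Hᵀ (computed over F_{q^m}, viewing the entries of S and C in F_{q^m} via the inclusion F_q ⊆ F_{q^m}) is the zero vector of length n−k−1, then the r×(n−k−1) matrix C·Hᵀ over F_{q^m} has rank at most r−1; equivalently, every r×r minor of C·Hᵀ vanishes. -/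

import Mathlib

/-- If the row vector `(1, α, …, α^{m−1}) · S · C · Hᵀ` vanishes
(for a nonzero `S`), then the `r × (n−k−1)` matrix `C · Hᵀ` over `F_{q^m}` has
rank at most `r − 1`; equivalently, every `r × r` minor of `C · Hᵀ` vanishes. -/
theorem stmt_0 (q m n k r : ℕ) (hq : IsPrimePow q)
    (hm : 0 < m) (hn : 0 < n) (hk : 0 < k) (hr : 0 < r)
    (hrn : r ≤ n) (hkn : k + 1 < n)
    (Fq L : Type) [Field Fq] [Fintype Fq] [Field L] [Fintype L] [Algebra Fq L]
    (hcardFq : Fintype.card Fq = q) (hcardL : Fintype.card L = q ^ m)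
    (α : L) (b : Module.Basis (Fin m) Fq L) (hb : ∀ i : Fin m, b i = α ^ (i : ℕ))
    (H : Matrix (Fin (n - k - 1)) (Fin n) L)
    (S : Matrix (Fin m) (Fin r) Fq) (hS : S ≠ 0)
    (C : Matrix (Fin r) (Fin n) Fq)
    (hzero : Matrix.vecMul (fun i : Fin m => α ^ (i : ℕ))
      (S.map (algebraMap Fq L) * C.map (algebraMap Fq L) * H.transpose) = 0) :
    (C.map (algebraMap Fq L) * H.transpose).rank ≤ r - 1 ∧
      ∀ (T : Finset (Fin (n - k - 1))) (hT : T.card = r),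
        ((C.map (algebraMap Fq L) * H.transpose).submatrix id
          (T.orderEmbOfFin hT)).det = 0 := by
  set M : Matrix (Fin r) (Fin (n - k - 1)) L :=
    C.map (algebraMap Fq L) * H.transpose with hM
  set w : Fin r → L :=
    Matrix.vecMul (fun i : Fin m => α ^ (i : ℕ)) (S.map (algebraMap Fq L)) with hwdef
  have hw0 : w ≠ 0 := by
    intro h
    apply hS
    ext i j
    have hj : w j = 0 := by rw [h]; rfl
    have : (∑ i : Fin m, S i j • b i) = 0 := by
      rw [← hj, hwdef]
      simp only [Matrix.vecMul, dotProduct, Matrix.map_apply]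
      refine Finset.sum_congr rfl fun i _ => ?_
      rw [hb i, Algebra.smul_def, mul_comm]
    have := linearIndependent_iff'.mp b.linearIndependent Finset.univ
      (fun i => S i j) this i (Finset.mem_univ i)
    simpa using this
  have hwM : Matrix.vecMul w M = 0 := by
    rw [hwdef, Matrix.vecMul_vecMul, hM, ← Matrix.mul_assoc]
    exact hzero
  constructor
  · -- rank bound
    rw [← Matrix.rank_transpose]
    have hker : w ∈ LinearMap.ker M.transpose.mulVecLin := by
      simp [Matrix.mulVecLin_apply, Matrix.mulVec_transpose, hwM]
    have hker1 : 1 ≤ Module.finrank L (LinearMap.ker M.transpose.mulVecLin) := by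
      have : LinearMap.ker M.transpose.mulVecLin ≠ ⊥ := by
        intro h
        rw [h, Submodule.mem_bot] at hker
        exact hw0 hker
      have := Submodule.nontrivial_iff_ne_bot.mpr this
      exact Module.finrank_pos
    have hsum := LinearMap.finrank_range_add_finrank_ker M.transpose.mulVecLin
    rw [Module.finrank_fintype_fun_eq_card, Fintype.card_fin] at hsum
    have : Matrix.rank M.transpose = Module.finrank L (LinearMap.range M.transpose.mulVecLin) := rfl
    omega
  · intro T hT
    rw [← Matrix.exists_vecMul_eq_zero_iff]
    refine ⟨w, hw0, ?_⟩
    ext j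
    have := congrFun hwM (T.orderEmbOfFin hT j)
    simpa [Matrix.vecMul, dotProduct] using this
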